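/- Let d ≥ 1, let ψ ∈ ℂ^(Fin d × Fin d) be a vector and let S be the d×d complex matrix with S_{l,k} = √d · ψ_{(k,l)}. Let P and Q be positive semidefinite d×d complex matrices. If ⟨ψ, (P ⊗ Q) ψ⟩ = 0, then P · (Sᴴ · Q · S)ᵀ = 0. -/

import Mathlib

open Matrix Kronecker
open scoped ComplexOrder

private lemma sum4_reorder {M : Type*} [AddCommMonoid M] {n : Type*} [Fintype n]
    (F : n → n → n → n → M) :
    ∑ k, ∑ l, ∑ k', ∑ l', F k l k' l' = ∑ l, ∑ l', ∑ k', ∑ k, F k l k' l' := by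
  rw [Finset.sum_comm]
  refine Finset.sum_congr rfl fun l _ => ?_
  calc ∑ k, ∑ k', ∑ l', F k l k' l'
      = ∑ k', ∑ k, ∑ l', F k l k' l' := Finset.sum_comm
    _ = ∑ k', ∑ l', ∑ k, F k l k' l' := Finset.sum_congr rfl fun k' _ => Finset.sum_comm
    _ = ∑ l', ∑ k', ∑ k, F k l k' l' := Finset.sum_comm

private lemma eq_zero_of_trace' (d : ℕ) (N : Matrix (Fin d) (Fin d) ℂ)
    (h : (Nᴴ * N).trace = 0) : N = 0 := by
  have h' : ∑ j, ∑ i, star (N i j) * N i j = 0 := by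
    simpa [Matrix.trace, Matrix.diag, Matrix.mul_apply, conjTranspose_apply] using h
  have hnn : ∀ j ∈ Finset.univ, (0:ℂ) ≤ ∑ i, star (N i j) * N i j :=
    fun j _ => Finset.sum_nonneg fun i _ => star_mul_self_nonneg _
  ext i j
  have h1 := (Finset.sum_eq_zero_iff_of_nonneg hnn).mp h' j (Finset.mem_univ j)
  have h2 := (Finset.sum_eq_zero_iff_of_nonneg
      (fun i _ => star_mul_self_nonneg (N i j))).mp h1 i (Finset.mem_univ i)
  have : star (N i j) * N i j = Complex.normSq (N i j) := by
    simp [Complex.normSq_eq_conj_mul_self, RCLike.star_def]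
  rw [this] at h2
  have := Complex.normSq_eq_zero.mp (by exact_mod_cast h2)
  simpa using this

private lemma posSemidef_iff_eq_transpose_mul_self {d : ℕ} {P : Matrix (Fin d) (Fin d) ℂ} :
    P.PosSemidef ↔ ∃ B : Matrix (Fin d) (Fin d) ℂ, P = Bᴴ * B := by
  classical
  open scoped MatrixOrder in
  refine ⟨fun hP => CStarAlgebra.nonneg_iff_eq_star_mul_self.mp hP.nonneg, ?_⟩
  rintro ⟨B, rfl⟩
  exact posSemidef_conjTranspose_mul_self B

theorem mul_transformed_povm_eq_zero
    (d : ℕ) (hd : 1 ≤ d)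
    (ψ : Fin d × Fin d → ℂ)
    (S : Matrix (Fin d) (Fin d) ℂ)
    (hS : S = Matrix.of (fun l k => (Real.sqrt d : ℂ) * ψ (k, l)))
    (P Q : Matrix (Fin d) (Fin d) ℂ)
    (hP : P.PosSemidef) (hQ : Q.PosSemidef)
    (h : star ψ ⬝ᵥ ((P ⊗ₖ Q) *ᵥ ψ) = 0) :
    P * (Sᴴ * Q * S)ᵀ = 0 := by
  set M : Matrix (Fin d) (Fin d) ℂ := Matrix.of fun k l => ψ (k, l) with hM
  obtain ⟨A, hA⟩ := posSemidef_iff_eq_transpose_mul_self.mp hP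
  obtain ⟨B, hB⟩ := posSemidef_iff_eq_transpose_mul_self.mp hQ.transpose
  -- the inner product equals a trace
  have key : (Mᴴ * P * M * Qᵀ).trace = 0 := by
    rw [← h]
    simp only [Matrix.trace, Matrix.diag, Matrix.mul_apply, Matrix.mulVec, dotProduct,
      conjTranspose_apply, transpose_apply, Matrix.of_apply, kroneckerMap_apply,
      Fintype.sum_prod_type, Pi.star_apply, Finset.mul_sum, Finset.sum_mul, hM]
    rw [sum4_reorder (fun k l k' l' => star (ψ (k, l)) * (P k k' * Q l l' * ψ (k', l')))]
    exact (Finset.sum_congr rfl fun _ _ => Finset.sum_congr rfl fun _ _ =>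
      Finset.sum_congr rfl fun _ _ => Finset.sum_congr rfl fun _ _ => by ring).symm
  -- deduce A * M * Bᴴ = 0
  have hN : A * M * Bᴴ = 0 := by
    apply eq_zero_of_trace' d
    have e : (A * M * Bᴴ)ᴴ * (A * M * Bᴴ) = B * (Mᴴ * (Aᴴ * (A * (M * Bᴴ)))) := by
      simp [Matrix.conjTranspose_mul, Matrix.mul_assoc]
    rw [e, Matrix.trace_mul_comm]
    have e2 : Mᴴ * (Aᴴ * (A * (M * Bᴴ))) * B = Mᴴ * P * M * Qᵀ := by
      rw [hA, hB]; simp only [Matrix.mul_assoc]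
    rw [e2, key]
  -- rewrite S in terms of M
  have hc : (Real.sqrt d : ℂ) * (Real.sqrt d : ℂ) = (d : ℂ) := by
    rw [← Complex.ofReal_mul, Real.mul_self_sqrt (Nat.cast_nonneg d)]
    norm_num
  have hS' : S = (Real.sqrt d : ℂ) • Mᵀ := by
    ext l k; simp [hS, hM]
  have hT : (Sᴴ * Q * S)ᵀ = (d : ℂ) • (M * Qᵀ * Mᴴ) := by
    rw [hS']
    simp only [Matrix.conjTranspose_smul, Matrix.smul_mul, Matrix.mul_smul,
      Matrix.transpose_smul, smul_smul, Matrix.transpose_mul, Matrix.transpose_transpose]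
    rw [Complex.star_def, Complex.conj_ofReal, hc]
    congr 1
    have : Mᵀᴴᵀ = Mᴴ := by ext i j; simp
    rw [this, Matrix.mul_assoc]
  rw [hT, Matrix.mul_smul, hA, hB]
  have : Aᴴ * A * (M * (Bᴴ * B) * Mᴴ) = Aᴴ * ((A * M * Bᴴ) * (B * Mᴴ)) := by
    simp only [Matrix.mul_assoc]
  rw [this, hN]
  simp
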